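/- Let N ≥ 3 be a natural number, let Δx > 0, and let A be the real N×N matrix indexed by ℤ/Nℤ with (A u)_i = −(u_{i+1} − u_{i−1})/(2Δx), i.e., A_{i,i+1} = −1/(2Δx), A_{i,i−1} = 1/(2Δx), and all other entries zero. Then the linear semidiscretization u'(t) = A u(t) is not positivity-preserving: there exist an initial vector u⁰ with all components strictly positive, a time t > 0, and an index i such that the i-th component of exp(tA)·u⁰ is strictly negative. -/

import Mathlib

open Matrix NormedSpace Filter Topology

/-- The second-order central discretization of linear advection
with periodic boundary conditions, `(A u)ᵢ = -(uᵢ₊₁ - uᵢ₋₁)/(2Δx)`, is not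
positivity-preserving: there are a componentwise positive initial vector `u⁰`,
a time `t > 0`, and an index `i` such that `(exp(tA) u⁰)ᵢ < 0`. -/
theorem stmt_12 (N : ℕ) [NeZero N] (hN : 3 ≤ N) (Δx : ℝ) (hΔx : 0 < Δx)
    (A : Matrix (ZMod N) (ZMod N) ℝ)
    (hA : ∀ i j : ZMod N, A i j =
      if j = i + 1 then -1 / (2 * Δx) else if j = i - 1 then 1 / (2 * Δx) else 0) :
    ∃ u0 : ZMod N → ℝ, (∀ i, 0 < u0 i) ∧
      ∃ t : ℝ, 0 < t ∧ ∃ i : ZMod N, (NormedSpace.exp (t • A)).mulVec u0 i < 0 := by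
  letI : SeminormedRing (Matrix (ZMod N) (ZMod N) ℝ) := Matrix.linftyOpSemiNormedRing
  letI : NormedRing (Matrix (ZMod N) (ZMod N) ℝ) := Matrix.linftyOpNormedRing
  letI : NormedAlgebra ℝ (Matrix (ZMod N) (ZMod N) ℝ) := Matrix.linftyOpNormedAlgebra
  haveI : Fact (1 < N) := ⟨by omega⟩
  have h10 : (1 : ZMod N) ≠ 0 := one_ne_zero
  -- the key entry of A is negative
  have hA01 : A 0 1 = -1 / (2 * Δx) := by
    rw [hA]; simp
  have hA01neg : A 0 1 < 0 := by
    rw [hA01]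
    have : 0 < 2 * Δx := by linarith
    exact div_neg_of_neg_of_pos (by norm_num) this
  -- entry map as a continuous linear map
  let L : Matrix (ZMod N) (ZMod N) ℝ →ₗ[ℝ] ℝ :=
    { toFun := fun M => M 0 1
      map_add' := fun _ _ => rfl
      map_smul' := fun _ _ => rfl }
  let Lc : Matrix (ZMod N) (ZMod N) ℝ →L[ℝ] ℝ := LinearMap.toContinuousLinearMap L
  -- derivative of the entry of the matrix exponential at 0
  set g : ℝ → ℝ := fun t => (exp (t • A)) 0 1 with hg_def
  have hD := hasDerivAt_exp_smul_const (𝕂 := ℝ) A (0 : ℝ)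
  have hg : HasDerivAt g (A 0 1) 0 := by
    have h := Lc.hasFDerivAt.comp_hasDerivAt (0 : ℝ) hD
    have he : Lc (exp ((0:ℝ) • A) * A) = A 0 1 := by
      simp [Lc, L, zero_smul, exp_zero]; rfl
    replace h := h.congr_deriv he
    exact h
  have hg0 : g 0 = 0 := by
    simp only [hg_def, zero_smul, exp_zero]
    exact Matrix.one_apply_ne (Ne.symm h10)
  -- find t > 0 with g t < 0
  have hslope : Tendsto (slope g 0) (𝓝[≠] (0:ℝ)) (𝓝 (A 0 1)) :=
    hasDerivAt_iff_tendsto_slope.mp hg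
  have hev : ∀ᶠ t in 𝓝[≠] (0:ℝ), slope g 0 t < 0 :=
    hslope.eventually_lt_const hA01neg
  have hev' : ∀ᶠ t in 𝓝[>] (0:ℝ), slope g 0 t < 0 :=
    hev.filter_mono (nhdsWithin_mono 0 (fun x hx => ne_of_gt hx))
  obtain ⟨t, hslope_t, ht⟩ := (hev'.and self_mem_nhdsWithin).exists
  have htpos : (0:ℝ) < t := ht
  have hgt : g t < 0 := by
    have : (g t - g 0) / (t - 0) < 0 := by
      rwa [slope_def_field] at hslope_t
    rw [hg0, sub_zero, sub_zero] at this
    rcases div_neg_iff.mp this with ⟨_, h2⟩ | ⟨h1, _⟩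
    · linarith
    · exact h1
  -- choose the initial data
  set M : Matrix (ZMod N) (ZMod N) ℝ := exp (t • A) with hM
  set S : ℝ := ∑ j, M 0 j with hS
  set B : ℝ := |S| + 1 with hB
  have hBpos : 0 < B := by positivity
  set ε : ℝ := (-(g t)) / (2 * B) with hε
  have hεpos : 0 < ε := by
    apply div_pos (by linarith) (by linarith)
  refine ⟨fun j => (if j = 1 then 1 else 0) + ε, fun j => ?_, t, htpos, 0, ?_⟩
  · by_cases h : j = 1 <;> simp [h] <;> linarith
  · have hcalc : M.mulVec (fun j => (if j = 1 then 1 else 0) + ε) 0 = g t + ε * S := by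
      show ∑ j, M 0 j * ((if j = 1 then 1 else 0) + ε) = M 0 1 + ε * S
      simp only [mul_add, Finset.sum_add_distrib]
      congr 1
      · simp [mul_ite]
      · rw [hS, Finset.mul_sum]
        exact Finset.sum_congr rfl fun j _ => mul_comm _ _
    rw [hcalc]
    have h1 : ε * S ≤ ε * |S| := mul_le_mul_of_nonneg_left (le_abs_self S) hεpos.le
    have h2 : ε * |S| ≤ ε * B := mul_le_mul_of_nonneg_left (by rw [hB]; linarith) hεpos.le
    have h3 : ε * B = -(g t) / 2 := by
      rw [hε]; field_simp
    nlinarith
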